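/- Let F be a continuous distribution function on ℝ and for each n ∈ ℕ let δ_n be an n-variate copula diagonal. Assume: (i) there exist a GEV distribution function H, sequences (c*_n), c*_n > 0, and (d*_n), and a map β* : ℕ → [0,∞) with β*(n) → 0 such that sup_{x∈ℝ} |F(c*_n x + d*_n)^n − H(x)| ≤ β*(n) for all n; (ii) there exist a rate r : ℕ → (0,∞) with r_n → ∞, a function D : [0,1] → [0,1], and s : ℕ → [0,∞) with s(n) → 0 such that sup_{u∈[0,1]} |δ_n(u^{1/r_n}) − D(u)| ≤ s(n) for all n; (iii) D is Hölder continuous with constant K and exponent κ ∈ (0,1], i.e., |D(u) − D(v)| ≤ K|u − v|^κ for all u, v ∈ [0,1]. Then for all n, sup_{x∈ℝ} |δ_n(F(c*_{⌈r_n⌉} x + d*_{⌈r_n⌉})) − D(H(x))| ≤ K(β*(⌈r_n⌉) + 3 e^{−1} · 1_{{r_n ∉ ℕ}} / r_n)^κ + s(n), and the right-hand side converges to 0 as n → ∞. (Theorem: uniform convergence rate under dependence.) -/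

import Mathlib

open Filter Set Topology

/-- The generalized extreme value (GEV) distribution function `H_{ξ,μ,σ}`. -/
noncomputable def GEVcdf (ξ μ σ : ℝ) : ℝ → ℝ := fun x =>
  if ξ = 0 then Real.exp (-Real.exp (-(x - μ) / σ))
  else if 0 < 1 + ξ * (x - μ) / σ then Real.exp (-(1 + ξ * (x - μ) / σ) ^ (-1 / ξ))
  else if 0 < ξ then 0 else 1

/-- A distribution function is GEV if it equals some `H_{ξ,μ,σ}` with `σ > 0`. -/
def IsGEV (H : ℝ → ℝ) : Prop := ∃ ξ μ σ : ℝ, 0 < σ ∧ H = GEVcdf ξ μ σ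

/-- A distribution function on `ℝ`: nondecreasing, right-continuous, with limits 0 at `-∞`
and 1 at `∞`, taking values in `[0,1]`. -/
def IsDistFun (F : ℝ → ℝ) : Prop :=
  Monotone F ∧ (∀ x, ContinuousWithinAt F (Ici x) x) ∧
    Tendsto F atBot (nhds 0) ∧ Tendsto F atTop (nhds 1) ∧ ∀ x, F x ∈ Icc (0:ℝ) 1

/-- The properties of the diagonal `u ↦ C_n(u,…,u)` of an `n`-dimensional copula. -/
def IsCopulaDiagonal (n : ℕ) (δ : ℝ → ℝ) : Prop :=
  δ 0 = 0 ∧ δ 1 = 1 ∧ MonotoneOn δ (Icc 0 1) ∧ (∀ u ∈ Icc (0:ℝ) 1, δ u ≤ u) ∧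
    ∀ u ∈ Icc (0:ℝ) 1, ∀ v ∈ Icc (0:ℝ) 1, |δ u - δ v| ≤ (n : ℝ) * |u - v|

/-- A distribution function on `[0,1]`: nondecreasing, right-continuous, `D(0)=0`, `D(1)=1`,
with values in `[0,1]`. -/
def IsDistFun01 (D : ℝ → ℝ) : Prop :=
  D 0 = 0 ∧ D 1 = 1 ∧ MonotoneOn D (Icc 0 1) ∧
    (∀ u ∈ Ico (0:ℝ) 1, ContinuousWithinAt D (Icc u 1) u) ∧
    ∀ u ∈ Icc (0:ℝ) 1, D u ∈ Icc (0:ℝ) 1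

/-- A degenerate distribution function `x ↦ 1_{[a,∞)}(x)`. -/
noncomputable def IsDegenerateDF (G : ℝ → ℝ) : Prop :=
  ∃ a : ℝ, ∀ x, G x = if a ≤ x then 1 else 0

/-- An Archimedean generator: continuous on `[0,∞)`, `ψ(0)=1`, values in `[0,1]`,
`ψ(t) → 0` as `t → ∞`, strictly decreasing on `[0, inf{x : ψ(x)=0}]` (equivalently,
strictly decreasing as long as it is positive). -/
def IsArchimedeanGenerator (ψ : ℝ → ℝ) : Prop :=
  ContinuousOn ψ (Ici 0) ∧ ψ 0 = 1 ∧ (∀ t ∈ Ici (0:ℝ), ψ t ∈ Icc (0:ℝ) 1) ∧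
    Tendsto ψ atTop (nhds 0) ∧
    ∀ s t : ℝ, 0 ≤ s → s < t → 0 < ψ s → ψ t < ψ s



lemma auxA (x : ℝ) : x * Real.exp (-x) ≤ Real.exp (-1) := by
  have h := Real.add_one_le_exp (x - 1)
  have h2 : x ≤ Real.exp (x - 1) := by linarith
  calc x * Real.exp (-x) ≤ Real.exp (x - 1) * Real.exp (-x) := by
        exact mul_le_mul_of_nonneg_right h2 (Real.exp_nonneg _)
    _ = Real.exp (-1) := by rw [← Real.exp_add]; ring_nf

-- gap lemma
lemma auxB (q t : ℝ) (m : ℕ) (hq0 : 0 ≤ q) (hq1 : q ≤ 1) (ht : 0 < t)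
    (h1 : t ≤ (m : ℝ)) (h2 : (m : ℝ) ≤ t + 1) :
    |q ^ t - q ^ m| ≤ Real.exp (-1) / t := by
  rcases eq_or_lt_of_le hq0 with hq | hq
  · have hm : 1 ≤ m := by
      by_contra h; push_neg at h; interval_cases m; simp at h1; linarith
    rw [← hq, Real.zero_rpow ht.ne', zero_pow (by omega)]
    simp [le_div_iff₀ ht, Real.exp_nonneg]
  · -- 0 < q
    have hle : q ^ m ≤ q ^ t := by
      rw [← Real.rpow_natCast]
      exact Real.rpow_le_rpow_of_exponent_ge hq hq1 h1
    rw [abs_of_nonneg (by linarith)]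
    set a : ℝ := (m : ℝ) - t with ha
    have ha0 : 0 ≤ a := by linarith
    have ha1 : a ≤ 1 := by linarith
    have hsplit : (q : ℝ) ^ m = q ^ t * q ^ a := by
      rw [← Real.rpow_natCast, ← Real.rpow_add hq]; ring_nf; rw [ha]; ring_nf
    have hlogq : Real.log q ≤ 0 := Real.log_nonpos hq0 hq1
    have key1 : 1 - q ^ a ≤ a * (-Real.log q) := by
      have : q ^ a = Real.exp (a * Real.log q) := by
        rw [Real.rpow_def_of_pos hq]; ring_nf
      rw [this]
      have := Real.add_one_le_exp (a * Real.log q)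
      linarith
    have hqt : q ^ t = Real.exp (t * Real.log q) := by
      rw [Real.rpow_def_of_pos hq]; ring_nf
    have hqtnn : (0:ℝ) ≤ q ^ t := Real.rpow_nonneg hq0 t
    have key2 : q ^ t * (-Real.log q) ≤ Real.exp (-1) / t := by
      set y : ℝ := -Real.log q with hy
      have hy0 : 0 ≤ y := by simp [hy]; linarith
      have : q ^ t * y = (t * y) * Real.exp (-(t * y)) / t := by
        rw [hqt]; field_simp; ring_nf; rw [hy]; ring_nf
      rw [this]
      gcongr
      exact auxA (t * y)
    calc q ^ t - q ^ m = q ^ t * (1 - q ^ a) := by rw [hsplit]; ring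
      _ ≤ q ^ t * (a * (-Real.log q)) := mul_le_mul_of_nonneg_left key1 hqtnn
      _ ≤ q ^ t * (1 * (-Real.log q)) := by
          apply mul_le_mul_of_nonneg_left _ hqtnn
          apply mul_le_mul_of_nonneg_right ha1; linarith
      _ = q ^ t * (-Real.log q) := by ring
      _ ≤ Real.exp (-1) / t := key2

lemma gev_mem {H : ℝ → ℝ} (hH : IsGEV H) (x : ℝ) : H x ∈ Icc (0:ℝ) 1 := by
  obtain ⟨ξ, μ, σ, hσ, rfl⟩ := hH
  unfold GEVcdf
  split_ifs with h1 h2 h3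
  · constructor
    · positivity
    · exact Real.exp_le_one_iff.mpr (neg_nonpos.mpr (Real.exp_nonneg _))
  · constructor
    · positivity
    · exact Real.exp_le_one_iff.mpr (neg_nonpos.mpr (Real.rpow_nonneg h2.le _))
  · exact ⟨le_rfl, zero_le_one⟩
  · exact ⟨zero_le_one, le_rfl⟩

lemma ceil_tendsto {r : ℕ → ℝ} (hrtop : Tendsto r atTop atTop) :
    Tendsto (fun n => Nat.ceil (r n)) atTop atTop := by
  rw [tendsto_atTop_atTop]
  intro b
  obtain ⟨i, hi⟩ := (tendsto_atTop.mp hrtop (b : ℝ)).exists_forall_of_atTop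
  refine ⟨i, fun a ha => ?_⟩
  have : (b : ℝ) ≤ r a := hi a ha
  have h2 : Nat.ceil ((b:ℝ)) ≤ Nat.ceil (r a) := Nat.ceil_mono this
  simpa using h2

open scoped Classical in
/-- Theorem: uniform convergence rate under dependence. -/
theorem uniform_convergence_rate_dependence
    (F H D : ℝ → ℝ) (cs ds : ℕ → ℝ) (δ : ℕ → ℝ → ℝ) (r : ℕ → ℝ)
    (β s : ℕ → ℝ) (K κ : ℝ)
    (hF : IsDistFun F) (hFcont : Continuous F)
    (hδ : ∀ n, IsCopulaDiagonal n (δ n))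
    (hH : IsGEV H) (hcs : ∀ n, 0 < cs n)
    (hβ0 : ∀ n, 0 ≤ β n) (hβ : Tendsto β atTop (nhds 0))
    (hβbound : ∀ n x, |F (cs n * x + ds n) ^ n - H x| ≤ β n)
    (hr : ∀ n, 0 < r n) (hrtop : Tendsto r atTop atTop)
    (hDmap : ∀ u ∈ Icc (0:ℝ) 1, D u ∈ Icc (0:ℝ) 1)
    (hs0 : ∀ n, 0 ≤ s n) (hs : Tendsto s atTop (nhds 0))
    (hsbound : ∀ n, ∀ u ∈ Icc (0:ℝ) 1, |δ n (u ^ (1 / r n)) - D u| ≤ s n)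
    (hκ : κ ∈ Ioc (0:ℝ) 1)
    (hHolder : ∀ u ∈ Icc (0:ℝ) 1, ∀ v ∈ Icc (0:ℝ) 1, |D u - D v| ≤ K * |u - v| ^ κ) :
    (∀ n x, |δ n (F (cs (Nat.ceil (r n)) * x + ds (Nat.ceil (r n)))) - D (H x)| ≤
      K * (β (Nat.ceil (r n)) +
        3 * Real.exp (-1) * (if ∃ m : ℕ, r n = (m : ℝ) then 0 else 1) / r n) ^ κ + s n) ∧
    Tendsto (fun n => K * (β (Nat.ceil (r n)) +
        3 * Real.exp (-1) * (if ∃ m : ℕ, r n = (m : ℝ) then 0 else 1) / r n) ^ κ + s n)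
      atTop (nhds 0) := by
  have hK : 0 ≤ K := by
    have h := hHolder 0 ⟨le_rfl, zero_le_one⟩ 1 ⟨zero_le_one, le_rfl⟩
    have h2 : |(0:ℝ) - 1| ^ κ = 1 := by
      rw [show |(0:ℝ) - 1| = 1 by norm_num, Real.one_rpow]
    rw [h2, mul_one] at h
    exact le_trans (abs_nonneg _) h
  have hindnn : ∀ n, (0:ℝ) ≤ 3 * Real.exp (-1) *
      (if ∃ m : ℕ, r n = (m : ℝ) then 0 else 1) / r n := by
    intro n
    split_ifs with h
    · simp
    · exact div_nonneg (by positivity) (hr n).le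
  constructor
  · intro n x
    set m := Nat.ceil (r n) with hm
    set q := F (cs m * x + ds m) with hqdef
    have hq : q ∈ Icc (0:ℝ) 1 := hF.2.2.2.2 _
    set u := q ^ (r n) with hudef
    have hu : u ∈ Icc (0:ℝ) 1 :=
      ⟨Real.rpow_nonneg hq.1 _, Real.rpow_le_one hq.1 hq.2 (hr n).le⟩
    have hback : u ^ (1 / r n) = q := by
      rw [hudef, ← Real.rpow_mul hq.1, mul_one_div_cancel (hr n).ne', Real.rpow_one]
    have h1 : |δ n q - D u| ≤ s n := by
      have := hsbound n u hu
      rwa [hback] at this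
    have hHx : H x ∈ Icc (0:ℝ) 1 := gev_mem hH x
    have h2 : |D u - D (H x)| ≤ K * |u - H x| ^ κ := hHolder u hu (H x) hHx
    -- bound on |u - q^m|
    have hgap : |u - q ^ m| ≤ 3 * Real.exp (-1) *
        (if ∃ m : ℕ, r n = (m : ℝ) then 0 else 1) / r n := by
      split_ifs with hcase
      · obtain ⟨m', hm'⟩ := hcase
        have : m = m' := by rw [hm, hm', Nat.ceil_natCast]
        rw [hudef, hm', this, Real.rpow_natCast]
        simp
      · have hb1 : r n ≤ (m : ℝ) := Nat.le_ceil _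
        have hb2 : (m : ℝ) ≤ r n + 1 := by
          have := Nat.ceil_lt_add_one (hr n).le
          exact this.le
        have := auxB q (r n) m hq.1 hq.2 (hr n) hb1 hb2
        refine this.trans ?_
        rw [mul_one]
        rw [div_le_div_iff₀ (hr n) (hr n)]
        have h3 : (0:ℝ) < Real.exp (-1) := Real.exp_pos _
        nlinarith [(hr n)]
    have hmain : |u - H x| ≤ β m + 3 * Real.exp (-1) *
        (if ∃ m : ℕ, r n = (m : ℝ) then 0 else 1) / r n := by
      have hb := hβbound m x
      calc |u - H x| ≤ |u - q ^ m| + |q ^ m - H x| := by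
            have := abs_sub_abs_le_abs_sub (u - H x) (u - q^m)
            calc |u - H x| = |(u - q ^ m) + (q ^ m - H x)| := by ring_nf
              _ ≤ |u - q ^ m| + |q ^ m - H x| := abs_add_le _ _
        _ ≤ _ := by
            have : |q ^ m - H x| ≤ β m := hb
            linarith [hgap]
    have h2' : K * |u - H x| ^ κ ≤ K * (β m + 3 * Real.exp (-1) *
        (if ∃ m : ℕ, r n = (m : ℝ) then 0 else 1) / r n) ^ κ := by
      apply mul_le_mul_of_nonneg_left _ hK
      exact Real.rpow_le_rpow (abs_nonneg _) hmain hκ.1.le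
    calc |δ n q - D (H x)| = |(δ n q - D u) + (D u - D (H x))| := by ring_nf
      _ ≤ |δ n q - D u| + |D u - D (H x)| := abs_add_le _ _
      _ ≤ s n + K * |u - H x| ^ κ := by linarith
      _ ≤ _ := by linarith
  · have hceil := ceil_tendsto hrtop
    have hβc : Tendsto (fun n => β (Nat.ceil (r n))) atTop (nhds 0) := hβ.comp hceil
    have hterm : Tendsto (fun n => 3 * Real.exp (-1) *
        (if ∃ m : ℕ, r n = (m : ℝ) then 0 else 1) / r n) atTop (nhds 0) := by
      apply squeeze_zero hindnn (g := fun n => 3 * Real.exp (-1) * (r n)⁻¹)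
      · intro n
        rw [div_eq_mul_inv]
        apply mul_le_mul_of_nonneg_right _ (inv_nonneg.mpr (hr n).le)
        split_ifs
        · simp; positivity
        · simp
      · have := hrtop.inv_tendsto_atTop
        have h := this.const_mul (3 * Real.exp (-1))
        simpa using h
    have hg : Tendsto (fun n => β (Nat.ceil (r n)) + 3 * Real.exp (-1) *
        (if ∃ m : ℕ, r n = (m : ℝ) then 0 else 1) / r n) atTop (nhds 0) := by
      simpa using hβc.add hterm
    have hcont : ContinuousAt (fun x : ℝ => x ^ κ) 0 :=
      Real.continuousAt_rpow_const 0 κ (Or.inr hκ.1.le)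
    have hgk := (hcont.tendsto.comp hg)
    rw [Real.zero_rpow hκ.1.ne'] at hgk
    have := (hgk.const_mul K).add hs
    simpa using this
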